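/- Let p be a prime with p ≡ 1 (mod 6), and let n, k, j be nonnegative integers with j ≤ k, k ≤ n − (p−1)/6 − 1, and n ≡ (p−1)/6 (mod p). Then the p-adic valuation of (1/k!) · C(k, j) · (5/6 − j)_{n+k+1} / (2/3 − j)_{k+1} is at least 1, where the Pochhammer symbols are interpreted p-adically (i.e., the rational number in question, which has p-integral denominator since the fractions 5/6, 2/3 make sense mod powers of p, is divisible by p). -/

import Mathlib

open Polynomial Finset



private lemma asc_eval_prod (n : ℕ) (x : ℚ) :
    (ascPochhammer ℚ n).eval x = ∏ i ∈ Finset.range n, (x + i) := by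
  induction n with
  | zero => simp
  | succ m ih =>
    rw [ascPochhammer_succ_right, Finset.prod_range_succ, ← ih]
    simp

private lemma padicValRat_prod (p : ℕ) [hp : Fact p.Prime] {s : Finset ℕ} {f : ℕ → ℚ}
    (hf : ∀ i ∈ s, f i ≠ 0) :
    padicValRat p (∏ i ∈ s, f i) = ∑ i ∈ s, padicValRat p (f i) := by
  classical
  induction s using Finset.cons_induction with
  | empty => simp
  | cons a s ha ih =>
    rw [Finset.prod_cons, Finset.sum_cons,
      padicValRat.mul (hf a (Finset.mem_cons_self a s))
        (Finset.prod_ne_zero_iff.mpr fun i hi => hf i (Finset.mem_cons_of_mem hi)),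
      ih fun i hi => hf i (Finset.mem_cons_of_mem hi)]

private lemma fval (p : ℕ) [hp : Fact p.Prime] (a : ℤ) (d : ℕ) (ha : a ≠ 0)
    (hd0 : 0 < d) (hd : ¬ p ∣ d) :
    padicValRat p ((a : ℚ) / (d : ℚ)) = padicValInt p a := by
  rw [padicValRat.div (by exact_mod_cast ha) (by exact_mod_cast hd0.ne'),
    padicValRat.of_int, ← padicValRat_of_nat,
    padicValNat.eq_zero_of_not_dvd hd]
  simp

private lemma val_count (p : ℕ) [hp : Fact p.Prime] (m : ℤ) (hm : m ≠ 0) (b : ℕ)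
    (hb : m.natAbs < 2 ^ b) :
    padicValInt p m = ((Finset.Ico 1 b).filter (fun a => (p : ℤ) ^ a ∣ m)).card := by
  classical
  have hv : ∀ a : ℕ, ((p : ℤ) ^ a ∣ m ↔ a ≤ padicValInt p m) := by
    intro a
    rw [padicValInt_dvd_iff]
    simp [hm]
  have hvb : padicValInt p m < b := by
    have h1 : (p : ℤ) ^ padicValInt p m ∣ m := (hv _).mpr le_rfl
    have h2 : p ^ padicValInt p m ∣ m.natAbs := by
      have : ((p ^ padicValInt p m : ℕ) : ℤ) ∣ m := by push_cast; exact h1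
      rwa [Int.natCast_dvd] at this
    have h3 : p ^ padicValInt p m ≤ m.natAbs := Nat.le_of_dvd (Int.natAbs_pos.mpr hm) h2
    have h4 : 2 ^ padicValInt p m ≤ p ^ padicValInt p m :=
      Nat.pow_le_pow_left hp.out.two_le _
    have := lt_of_le_of_lt (le_trans h4 h3) hb
    exact Nat.pow_lt_pow_iff_right (le_refl 2) |>.mp this
  have : (Finset.Ico 1 b).filter (fun a => (p : ℤ) ^ a ∣ m)
      = Finset.Ico 1 (padicValInt p m + 1) := by
    ext a
    simp only [Finset.mem_filter, Finset.mem_Ico, hv a]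
    omega
  rw [this, Nat.card_Ico]
  omega

private lemma count_lower (P M r : ℕ) (hP : 0 < P) (hr : r < P) (hrM : r < M) :
    (M - 1 - r) / P + 1 ≤ ((Finset.range M).filter (fun i => i % P = r)).card := by
  classical
  have hsub : (Finset.range ((M - 1 - r) / P + 1)).image (fun y => r + P * y)
      ⊆ (Finset.range M).filter (fun i => i % P = r) := by
    intro i hi
    simp only [Finset.mem_image, Finset.mem_range] at hi
    obtain ⟨y, hy, rfl⟩ := hi
    simp only [Finset.mem_filter, Finset.mem_range]
    constructor
    · have h1 : P * y ≤ P * ((M - 1 - r) / P) := Nat.mul_le_mul_left _ (by omega)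
      have h2 : P * ((M - 1 - r) / P) ≤ M - 1 - r := by
        rw [mul_comm]; exact Nat.div_mul_le_self _ _
      omega
    · rw [Nat.add_mul_mod_self_left, Nat.mod_eq_of_lt hr]
  calc (M - 1 - r) / P + 1 = (Finset.range ((M - 1 - r) / P + 1)).card := by simp
    _ = ((Finset.range ((M - 1 - r) / P + 1)).image (fun y => r + P * y)).card := by
        rw [Finset.card_image_of_injective]
        intro a b hab
        simp only at hab
        exact Nat.eq_of_mul_eq_mul_left hP (by omega)
    _ ≤ _ := Finset.card_le_card hsub

private lemma count_upper (P M r : ℕ) (hP : 0 < P) (hr : r < P) :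
    ((Finset.range M).filter (fun i => i % P = r)).card
      ≤ if r < M then (M - 1 - r) / P + 1 else 0 := by
  classical
  split_ifs with h
  · have : ((Finset.range M).filter (fun i => i % P = r)).card
        ≤ (Finset.range ((M - 1 - r) / P + 1)).card := by
      apply Finset.card_le_card_of_injOn (fun i => (i - r) / P)
      · intro i hi
        simp only [Finset.mem_coe, Finset.mem_filter, Finset.mem_range] at hi
        obtain ⟨hiM, hir⟩ := hi
        have hge : r ≤ i := by
          have := Nat.mod_le i P
          omega
        simp only [Finset.mem_coe, Finset.mem_range]
        have h5 : i - r ≤ M - 1 - r := by omega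
        have := Nat.div_le_div_right (c := P) h5
        omega
      · intro i hi i' hi' he
        simp only [Finset.coe_filter, Set.mem_setOf_eq, Finset.mem_range] at hi hi'
        have hge : r ≤ i := by have := Nat.mod_le i P; omega
        have hge' : r ≤ i' := by have := Nat.mod_le i' P; omega
        have d1 : P ∣ i - r := by
          have : r ≡ i [MOD P] := by
            unfold Nat.ModEq
            rw [Nat.mod_eq_of_lt hr, hi.2]
          exact (Nat.modEq_iff_dvd' hge).mp this
        have d2 : P ∣ i' - r := by
          have : r ≡ i' [MOD P] := by
            unfold Nat.ModEq
            rw [Nat.mod_eq_of_lt hr, hi'.2]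
          exact (Nat.modEq_iff_dvd' hge').mp this
        have e1 : i = r + P * ((i - r) / P) := by
          rw [Nat.mul_div_cancel' d1]; omega
        have e2 : i' = r + P * ((i' - r) / P) := by
          rw [Nat.mul_div_cancel' d2]; omega
        simp only at he
        rw [e1, e2, he]
    simpa using this
  · convert Nat.zero_le 0
    rw [Finset.card_eq_zero, Finset.filter_eq_empty_iff]
    intro i hi
    simp only [Finset.mem_range] at hi
    have : i % P = i := Nat.mod_eq_of_lt (by omega)
    omega

private lemma bridge (P c s o : ℕ) (hP : 0 < P) (hcop : IsCoprime (P : ℤ) (c : ℤ))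
    (hdvd : (P : ℤ) ∣ ((c * s + o : ℕ) : ℤ)) (i j : ℕ) :
    ((P : ℤ) ∣ (c * i - c * j + o : ℤ)) ↔ i % P = (j + s) % P := by
  have key : (c * (i : ℤ) - c * j + o) = c * ((i : ℤ) - ((j + s : ℕ) : ℤ)) + ((c * s + o : ℕ) : ℤ) := by
    push_cast; ring
  rw [key]
  constructor
  · intro h
    have h2 : (P : ℤ) ∣ (c : ℤ) * ((i : ℤ) - ((j + s : ℕ) : ℤ)) := by
      have := dvd_sub h hdvd
      simpa using this
    have h3 : (P : ℤ) ∣ ((i : ℤ) - ((j + s : ℕ) : ℤ)) := hcop.dvd_of_dvd_mul_left h2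
    have h4 : ((i : ℕ) : ℤ) % P = (((j + s : ℕ) : ℕ) : ℤ) % P := by
      rw [Int.emod_eq_emod_iff_emod_sub_eq_zero]
      exact Int.emod_eq_zero_of_dvd h3
    have h5 : ((i % P : ℕ) : ℤ) = (((j + s) % P : ℕ) : ℤ) := by
      rw [Int.natCast_mod, Int.natCast_mod]
      exact_mod_cast h4
    exact_mod_cast h5
  · intro h
    apply dvd_add _ hdvd
    have h3 : (P : ℤ) ∣ ((i : ℤ) - ((j + s : ℕ) : ℤ)) := by
      rw [Int.dvd_iff_emod_eq_zero, ← Int.emod_eq_emod_iff_emod_sub_eq_zero,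
        ← Int.natCast_mod, ← Int.natCast_mod, h]
    exact Dvd.dvd.mul_left h3 (c : ℤ)

private lemma key_ineq (p a q t P n k j : ℕ) (ha : 1 ≤ a) (hp2 : 2 ≤ p)
    (hP : P = p ^ a) (hq : p = 6 * q + 1) (ht : P = 6 * t + 1)
    (hjk : j ≤ k) (hnk : k + q + 1 ≤ n) (hdvd : p ∣ n - q)
    (N D : ℕ)
    (hN : (if (j + 5 * t) % P ≤ n + k then (n + k - (j + 5 * t) % P) / P + 1 else 0) ≤ N)
    (hD : D ≤ (if (j + 4 * t) % P ≤ k then (k - (j + 4 * t) % P) / P + 1 else 0)) :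
    j / P + (k - j) / P + D + (if a = 1 then 1 else 0) ≤ N := by
  have hP0 : 0 < P := by omega
  have htP : t < P := by omega
  have hρσ : (j + 5 * t) % P = ((j + 4 * t) % P + t) % P := by
    conv_lhs => rw [show j + 5 * t = (j + 4 * t) + t from by ring]
    rw [Nat.add_mod, Nat.mod_eq_of_lt htP]
  set σ := (j + 4 * t) % P with hσdef
  set ρ := (j + 5 * t) % P with hρdef
  have hσP : σ < P := Nat.mod_lt _ hP0
  have hρP : ρ < P := Nat.mod_lt _ hP0
  obtain ⟨AP, hAP⟩ : ∃ z, (j / P) * P = z := ⟨_, rfl⟩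
  obtain ⟨BP, hBP⟩ : ∃ z, ((k - j) / P) * P = z := ⟨_, rfl⟩
  obtain ⟨CP, hCP⟩ : ∃ z, ((k - σ) / P) * P = z := ⟨_, rfl⟩
  have hjd : j = AP + j % P := by rw [← hAP, mul_comm]; exact (Nat.div_add_mod j P).symm
  have hkd : k - j = BP + (k - j) % P := by
    rw [← hBP, mul_comm]; exact (Nat.div_add_mod (k - j) P).symm
  have hkσ : k - σ = CP + (k - σ) % P := by
    rw [← hCP, mul_comm]; exact (Nat.div_add_mod (k - σ) P).symm
  have hα : j % P < P := Nat.mod_lt _ hP0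
  have hβ : (k - j) % P < P := Nat.mod_lt _ hP0
  have hxP : (k - σ) % P < P := Nat.mod_lt _ hP0
  -- key sublemma
  have hβx : σ ≤ k → t ≤ (k - j) % P + (k - σ) % P := by
    intro hσk
    have e1 : σ ≡ j + 4 * t [MOD P] := Nat.mod_modEq _ _
    have e2 : (k - j) % P ≡ k - j [MOD P] := Nat.mod_modEq _ _
    have h1 : k ≡ (k - σ) + (j + 4 * t) [MOD P] := by
      have hk : k = (k - σ) + σ := by omega
      nth_rewrite 1 [hk]
      exact Nat.ModEq.add_left (k - σ) e1
    have h2 : ((k - j) % P + 2 * t + 1) + (j + 4 * t) ≡ k [MOD P] := by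
      have hstep : ((k - j) % P + 2 * t + 1) + (j + 4 * t) = ((k - j) % P + j) + P := by
        omega
      rw [hstep]
      calc ((k - j) % P + j) + P ≡ (k - j) % P + j [MOD P] := by
            show ((k - j) % P + j + P) % P = ((k - j) % P + j) % P
            exact Nat.add_mod_right _ _
        _ ≡ (k - j) + j [MOD P] := Nat.ModEq.add_right j e2
        _ = k := by omega
    have h4 : (k - σ) + (j + 4 * t) ≡ ((k - j) % P + 2 * t + 1) + (j + 4 * t) [MOD P] :=
      h1.symm.trans h2.symm
    have hx : (k - σ) % P = ((k - j) % P + 2 * t + 1) % P :=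
      Nat.ModEq.add_right_cancel' _ h4
    rcases lt_or_ge ((k - j) % P + 2 * t + 1) P with hc | hc
    · rw [Nat.mod_eq_of_lt hc] at hx; omega
    · rw [Nat.mod_eq_sub_mod hc,
        Nat.mod_eq_of_lt (show (k - j) % P + 2 * t + 1 - P < P by omega)] at hx
      omega
  rcases eq_or_ne a 1 with h1 | h1
  · -- case a = 1
    rw [if_pos h1]
    have hdvd' : P ∣ n - q := by rw [hP, h1, pow_one]; exact hdvd
    have htq : t = q := by
      have hq' : P = 6 * q + 1 := by rw [hP, h1, pow_one]; exact hq
      omega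
    subst htq
    obtain ⟨MP, hMP⟩ : ∃ z, ((n - t) / P) * P = z := ⟨_, rfl⟩
    have hnd : n = t + MP := by rw [← hMP, Nat.div_mul_cancel hdvd']; omega
    have hABP : AP + BP + P ≤ MP := by
      have h3 : j / P + (k - j) / P < (n - t) / P := by
        have h4 : (j / P + (k - j) / P) * P < ((n - t) / P) * P := by
          rw [add_mul, hAP, hBP, hMP]; omega
        exact lt_of_mul_lt_mul_right h4 (Nat.zero_le P)
      have h5 : (j / P + (k - j) / P + 1) * P ≤ ((n - t) / P) * P :=
        Nat.mul_le_mul_right P (by omega)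
      rw [add_mul, add_mul, one_mul, hAP, hBP, hMP] at h5
      omega
    by_cases hσk : σ ≤ k
    · rw [if_pos hσk] at hD
      have hbx := hβx hσk
      have hcomp : AP + BP + CP + P + ρ ≤ n + k := by
        rcases lt_or_ge (σ + t) P with hw | hw
        · have hρv : ρ = σ + t := by rw [hρσ, Nat.mod_eq_of_lt hw]
          omega
        · have hρv : ρ = σ + t - P := by
            rw [hρσ, Nat.mod_eq_sub_mod hw,
              Nat.mod_eq_of_lt (show σ + t - P < P by omega)]
          omega
      have hρnk : ρ ≤ n + k := by omega
      rw [if_pos hρnk] at hN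
      have hdiv : j / P + (k - j) / P + (k - σ) / P + 1 ≤ (n + k - ρ) / P := by
        rw [Nat.le_div_iff_mul_le hP0]
        rw [add_mul, add_mul, add_mul, one_mul, hAP, hBP, hCP]
        omega
      omega
    · rw [if_neg hσk] at hD
      have hcomp : AP + BP + ρ ≤ n + k := by omega
      have hρnk : ρ ≤ n + k := by omega
      rw [if_pos hρnk] at hN
      have hdiv : j / P + (k - j) / P ≤ (n + k - ρ) / P := by
        rw [Nat.le_div_iff_mul_le hP0]
        rw [add_mul, hAP, hBP]
        omega
      omega
  · -- case a ≥ 2 (only a ≠ 1 is used)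
    rw [if_neg h1]
    by_cases hσk : σ ≤ k
    · rw [if_pos hσk] at hD
      have hbx := hβx hσk
      have hcomp : AP + BP + CP + ρ ≤ n + k := by
        rcases lt_or_ge (σ + t) P with hw | hw
        · have hρv : ρ = σ + t := by rw [hρσ, Nat.mod_eq_of_lt hw]
          omega
        · have hρv : ρ = σ + t - P := by
            rw [hρσ, Nat.mod_eq_sub_mod hw,
              Nat.mod_eq_of_lt (show σ + t - P < P by omega)]
          omega
      have hρnk : ρ ≤ n + k := by omega
      rw [if_pos hρnk] at hN
      have hdiv : j / P + (k - j) / P + (k - σ) / P ≤ (n + k - ρ) / P := by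
        rw [Nat.le_div_iff_mul_le hP0]
        rw [add_mul, add_mul, hAP, hBP, hCP]
        omega
      omega
    · rw [if_neg hσk] at hD
      by_cases hz : j / P = 0 ∧ (k - j) / P = 0
      · rw [hz.1, hz.2]; omega
      · have hge : P ≤ AP ∨ P ≤ BP := by
          rcases Nat.eq_zero_or_pos (j / P) with h0 | h0
          · right
            have h2 : 0 < (k - j) / P := by
              rcases Nat.eq_zero_or_pos ((k - j) / P) with h3 | h3
              · exact absurd ⟨h0, h3⟩ hz
              · exact h3
            have : P ≤ ((k - j) / P) * P := Nat.le_mul_of_pos_left P h2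
            omega
          · left
            have : P ≤ (j / P) * P := Nat.le_mul_of_pos_left P h0
            omega
        have hcomp : AP + BP + ρ ≤ n + k := by omega
        have hρnk : ρ ≤ n + k := by omega
        rw [if_pos hρnk] at hN
        have hdiv : j / P + (k - j) / P ≤ (n + k - ρ) / P := by
          rw [Nat.le_div_iff_mul_le hP0]
          rw [add_mul, hAP, hBP]
          omega
        omega

section MAIN
variable {p : ℕ} [hpF : Fact p.Prime]

-- Sum over levels of an integer's valuation (stated as needed).
private lemma sum_val_eq (b : ℕ) (s : Finset ℕ) (f : ℕ → ℤ)
    (hf : ∀ i ∈ s, f i ≠ 0) (hb : ∀ i ∈ s, (f i).natAbs < 2 ^ b) :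
    ∑ i ∈ s, padicValInt p (f i)
      = ∑ a ∈ Finset.Ico 1 b, ((s.filter (fun i => (p : ℤ) ^ a ∣ f i)).card) := by
  classical
  have h1 : ∀ i ∈ s, padicValInt p (f i)
      = ∑ a ∈ Finset.Ico 1 b, (if (p : ℤ) ^ a ∣ f i then 1 else 0) := by
    intro i hi
    rw [val_count p (f i) (hf i hi) b (hb i hi), Finset.card_filter]
  rw [Finset.sum_congr rfl h1, Finset.sum_comm]
  apply Finset.sum_congr rfl
  intro a _
  rw [Finset.card_filter]

end MAIN

/-- let p ≡ 1 (mod 6) be prime and n, k, j nonnegative integers with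
j ≤ k, k ≤ n − (p−1)/6 − 1 and n ≡ (p−1)/6 (mod p). Then the p-adic valuation of
(1/k!)·C(k,j)·(5/6 − j)_{n+k+1}/(2/3 − j)_{k+1} is at least 1. -/
theorem statement16 (p : ℕ) (hp : p.Prime) (hp1 : p % 6 = 1)
    (n k j : ℕ) (hj : j ≤ k) (hkn : k + (p - 1) / 6 + 1 ≤ n)
    (hn : n ≡ (p - 1) / 6 [MOD p]) :
    1 ≤ padicValRat p
        ((1 / (k.factorial : ℚ)) * (k.choose j : ℚ) *
          (ascPochhammer ℚ (n + k + 1)).eval (5 / 6 - (j : ℚ)) /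
          (ascPochhammer ℚ (k + 1)).eval (2 / 3 - (j : ℚ))) := by
  haveI : Fact p.Prime := ⟨hp⟩
  have hp2 : 2 ≤ p := hp.two_le
  have hp7 : 7 ≤ p := by omega
  set q := (p - 1) / 6 with hqdef
  have hq : p = 6 * q + 1 := by omega
  have hdvd : p ∣ n - q := (Nat.modEq_iff_dvd' (by omega)).mp hn.symm
  -- basic nonvanishing facts
  have hfac6 : ∀ i : ℕ, (6 * (i : ℤ) - 6 * (j : ℤ) + 5) ≠ 0 := by intro i; omega
  have hfac3 : ∀ i : ℕ, (3 * (i : ℤ) - 3 * (j : ℤ) + 2) ≠ 0 := by intro i; omega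
  have hfq6 : ∀ i : ℕ, (5 / 6 - (j : ℚ) + i)
      = ((6 * (i : ℤ) - 6 * (j : ℤ) + 5 : ℤ) : ℚ) / ((6 : ℕ) : ℚ) := by
    intro i; push_cast; ring
  have hfq3 : ∀ i : ℕ, (2 / 3 - (j : ℚ) + i)
      = ((3 * (i : ℤ) - 3 * (j : ℤ) + 2 : ℤ) : ℚ) / ((3 : ℕ) : ℚ) := by
    intro i; push_cast; ring
  have h6ne : (((6 : ℕ) : ℚ)) ≠ 0 := by norm_num
  have h3ne : (((3 : ℕ) : ℚ)) ≠ 0 := by norm_num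
  have hfq6ne : ∀ i ∈ Finset.range (n + k + 1), (5 / 6 - (j : ℚ) + i) ≠ 0 := by
    intro i _
    rw [hfq6 i]
    exact div_ne_zero (by exact_mod_cast hfac6 i) h6ne
  have hfq3ne : ∀ i ∈ Finset.range (k + 1), (2 / 3 - (j : ℚ) + i) ≠ 0 := by
    intro i _
    rw [hfq3 i]
    exact div_ne_zero (by exact_mod_cast hfac3 i) h3ne
  have hNum0 : (ascPochhammer ℚ (n + k + 1)).eval (5 / 6 - (j : ℚ)) ≠ 0 := by
    rw [asc_eval_prod]
    exact Finset.prod_ne_zero_iff.mpr hfq6ne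
  have hDen0 : (ascPochhammer ℚ (k + 1)).eval (2 / 3 - (j : ℚ)) ≠ 0 := by
    rw [asc_eval_prod]
    exact Finset.prod_ne_zero_iff.mpr hfq3ne
  have hk0 : ((k.factorial : ℚ)) ≠ 0 := by exact_mod_cast k.factorial_ne_zero
  have h1k : (1 / (k.factorial : ℚ)) ≠ 0 := one_div_ne_zero hk0
  have hC0 : ((k.choose j : ℚ)) ≠ 0 := by exact_mod_cast (Nat.choose_pos hj).ne'
  -- valuations of the two Pochhammer products
  have hvalN : padicValRat p ((ascPochhammer ℚ (n + k + 1)).eval (5 / 6 - (j : ℚ)))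
      = ∑ i ∈ Finset.range (n + k + 1), (padicValInt p (6 * (i : ℤ) - 6 * (j : ℤ) + 5) : ℤ) := by
    rw [asc_eval_prod, padicValRat_prod p hfq6ne]
    refine Finset.sum_congr rfl fun i _ => ?_
    rw [hfq6 i, fval p _ 6 (hfac6 i) (by norm_num) (fun h => absurd (Nat.le_of_dvd (by norm_num) h) (by omega))]
  have hvalD : padicValRat p ((ascPochhammer ℚ (k + 1)).eval (2 / 3 - (j : ℚ)))
      = ∑ i ∈ Finset.range (k + 1), (padicValInt p (3 * (i : ℤ) - 3 * (j : ℤ) + 2) : ℤ) := by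
    rw [asc_eval_prod, padicValRat_prod p hfq3ne]
    refine Finset.sum_congr rfl fun i _ => ?_
    rw [hfq3 i, fval p _ 3 (hfac3 i) (by norm_num) (fun h => absurd (Nat.le_of_dvd (by norm_num) h) (by omega))]
  have hE : padicValRat p ((1 / (k.factorial : ℚ)) * (k.choose j : ℚ) *
        (ascPochhammer ℚ (n + k + 1)).eval (5 / 6 - (j : ℚ)) /
        (ascPochhammer ℚ (k + 1)).eval (2 / 3 - (j : ℚ)))
      = -(padicValNat p k.factorial : ℤ) + (padicValNat p (k.choose j) : ℤ)
        + ∑ i ∈ Finset.range (n + k + 1), (padicValInt p (6 * (i : ℤ) - 6 * (j : ℤ) + 5) : ℤ)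
        - ∑ i ∈ Finset.range (k + 1), (padicValInt p (3 * (i : ℤ) - 3 * (j : ℤ) + 2) : ℤ) := by
    rw [padicValRat.div (mul_ne_zero (mul_ne_zero h1k hC0) hNum0) hDen0,
      padicValRat.mul (mul_ne_zero h1k hC0) hNum0,
      padicValRat.mul h1k hC0, one_div, padicValRat.inv,
      ← padicValRat_of_nat (n := k.factorial), ← padicValRat_of_nat (n := k.choose j),
      hvalN, hvalD]
  rw [hE]
  have hkum : padicValNat p k.factorial
      = padicValNat p (k.choose j) + padicValNat p j.factorial
        + padicValNat p (k - j).factorial := by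
    rw [← Nat.choose_mul_factorial_mul_factorial hj,
      padicValNat.mul (mul_ne_zero (Nat.choose_pos hj).ne' j.factorial_ne_zero)
        (k - j).factorial_ne_zero,
      padicValNat.mul (Nat.choose_pos hj).ne' j.factorial_ne_zero]
  -- the main counting inequality
  set b := 6 * (n + k) + 6 with hbdef
  have hbound : ∀ m : ℕ, m ≤ 6 * (n + k) + 5 → m < 2 ^ b := by
    intro m hm
    have h2 : 6 * (n + k) + 5 < 2 ^ (6 * (n + k) + 5) := Nat.lt_two_pow_self
    have h3 : (2:ℕ) ^ (6 * (n + k) + 5) ≤ 2 ^ b := Nat.pow_le_pow_right (by norm_num) (by omega)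
    omega
  have hS6 : ∑ i ∈ Finset.range (n + k + 1), padicValInt p (6 * (i : ℤ) - 6 * (j : ℤ) + 5)
      = ∑ a ∈ Finset.Ico 1 b, ((Finset.range (n + k + 1)).filter
          (fun i : ℕ => (p : ℤ) ^ a ∣ 6 * (i : ℤ) - 6 * (j : ℤ) + 5)).card :=
    sum_val_eq b _ _ (fun i _ => hfac6 i) (fun i hi => by
      apply hbound
      simp only [Finset.mem_range] at hi
      omega)
  have hS3 : ∑ i ∈ Finset.range (k + 1), padicValInt p (3 * (i : ℤ) - 3 * (j : ℤ) + 2)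
      = ∑ a ∈ Finset.Ico 1 b, ((Finset.range (k + 1)).filter
          (fun i : ℕ => (p : ℤ) ^ a ∣ 3 * (i : ℤ) - 3 * (j : ℤ) + 2)).card :=
    sum_val_eq b _ _ (fun i _ => hfac3 i) (fun i hi => by
      apply hbound
      simp only [Finset.mem_range] at hi
      omega)
  have hFj : padicValNat p j.factorial = ∑ a ∈ Finset.Ico 1 b, j / p ^ a :=
    padicValNat_factorial (lt_of_le_of_lt (Nat.log_le_self p j) (by omega))
  have hFkj : padicValNat p (k - j).factorial = ∑ a ∈ Finset.Ico 1 b, (k - j) / p ^ a :=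
    padicValNat_factorial (lt_of_le_of_lt (Nat.log_le_self p (k - j)) (by omega))
  have h1sum : ∑ a ∈ Finset.Ico 1 b, (if a = 1 then 1 else 0) = (1 : ℕ) := by
    rw [Finset.sum_ite_eq' (Finset.Ico 1 b) 1 (fun _ => 1)]
    simp only [Finset.mem_Ico]
    rw [if_pos (by omega)]
  -- per-level inequality
  have hper : ∀ a ∈ Finset.Ico 1 b,
      (if a = 1 then 1 else 0) + j / p ^ a + (k - j) / p ^ a
        + ((Finset.range (k + 1)).filter
            (fun i : ℕ => (p : ℤ) ^ a ∣ 3 * (i : ℤ) - 3 * (j : ℤ) + 2)).card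
      ≤ ((Finset.range (n + k + 1)).filter
          (fun i : ℕ => (p : ℤ) ^ a ∣ 6 * (i : ℤ) - 6 * (j : ℤ) + 5)).card := by
    intro a haIco
    simp only [Finset.mem_Ico] at haIco
    set P := p ^ a with hPdef
    have hP0 : 0 < P := pow_pos (by omega) a
    have hPmod : P % 6 = 1 := by
      rw [hPdef, Nat.pow_mod, hp1, one_pow]
      norm_num
    set t := (P - 1) / 6 with htdef
    have htP : P = 6 * t + 1 := by omega
    have hcp6 : Nat.Coprime p 6 := by
      show Nat.gcd p 6 = 1
      rw [Nat.gcd_comm, Nat.gcd_rec, hp1]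
      simp
    have hcop : IsCoprime ((P : ℕ) : ℤ) ((6 : ℕ) : ℤ) := by
      rw [Nat.isCoprime_iff_coprime]
      exact Nat.Coprime.pow_left a hcp6
    have hcop3 : IsCoprime ((P : ℕ) : ℤ) ((3 : ℕ) : ℤ) := by
      rw [Nat.isCoprime_iff_coprime]
      exact Nat.Coprime.pow_left a (hcp6.coprime_dvd_right (by norm_num))
    have hdN : ((P : ℕ) : ℤ) ∣ ((6 * (5 * t) + 5 : ℕ) : ℤ) := by
      have h5 : (6 * (5 * t) + 5 : ℕ) = 5 * P := by omega
      rw [h5]; push_cast; exact dvd_mul_left _ _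
    have hdD : ((P : ℕ) : ℤ) ∣ ((3 * (4 * t) + 2 : ℕ) : ℤ) := by
      have h5 : (3 * (4 * t) + 2 : ℕ) = 2 * P := by omega
      rw [h5]; push_cast; exact dvd_mul_left _ _
    have hcastP : (p : ℤ) ^ a = ((P : ℕ) : ℤ) := by rw [hPdef]; push_cast; ring
    have hfiltN : (Finset.range (n + k + 1)).filter
          (fun i : ℕ => (p : ℤ) ^ a ∣ 6 * (i : ℤ) - 6 * (j : ℤ) + 5)
        = (Finset.range (n + k + 1)).filter (fun i => i % P = (j + 5 * t) % P) := by
      apply Finset.filter_congr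
      intro i _
      rw [hcastP, show (6 * (i : ℤ) - 6 * (j : ℤ) + 5)
          = (((6 : ℕ) : ℤ) * i - ((6 : ℕ) : ℤ) * j + ((5 : ℕ) : ℤ)) by push_cast; ring]
      exact bridge P 6 (5 * t) 5 hP0 hcop hdN i j
    have hfiltD : (Finset.range (k + 1)).filter
          (fun i : ℕ => (p : ℤ) ^ a ∣ 3 * (i : ℤ) - 3 * (j : ℤ) + 2)
        = (Finset.range (k + 1)).filter (fun i => i % P = (j + 4 * t) % P) := by
      apply Finset.filter_congr
      intro i _
      rw [hcastP, show (3 * (i : ℤ) - 3 * (j : ℤ) + 2)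
          = (((3 : ℕ) : ℤ) * i - ((3 : ℕ) : ℤ) * j + ((2 : ℕ) : ℤ)) by push_cast; ring]
      exact bridge P 3 (4 * t) 2 hP0 hcop3 hdD i j
    rw [hfiltN, hfiltD]
    have hρP : (j + 5 * t) % P < P := Nat.mod_lt _ hP0
    have hσP : (j + 4 * t) % P < P := Nat.mod_lt _ hP0
    have hNlow : (if (j + 5 * t) % P ≤ n + k then (n + k - (j + 5 * t) % P) / P + 1 else 0)
        ≤ ((Finset.range (n + k + 1)).filter (fun i => i % P = (j + 5 * t) % P)).card := by
      split_ifs with h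
      · have h2 := count_lower P (n + k + 1) ((j + 5 * t) % P) hP0 hρP (by omega)
        simpa using h2
      · exact Nat.zero_le _
    have hDup : ((Finset.range (k + 1)).filter (fun i => i % P = (j + 4 * t) % P)).card
        ≤ (if (j + 4 * t) % P ≤ k then (k - (j + 4 * t) % P) / P + 1 else 0) := by
      have h2 := count_upper P (k + 1) ((j + 4 * t) % P) hP0 hσP
      simpa [Nat.lt_succ_iff] using h2
    have := key_ineq p a q t P n k j haIco.1 hp2 hPdef hq htP hj (by omega) hdvd
      _ _ hNlow hDup
    omega
  have hMAIN : 1 + padicValNat p j.factorial + padicValNat p (k - j).factorial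
      + ∑ i ∈ Finset.range (k + 1), padicValInt p (3 * (i : ℤ) - 3 * (j : ℤ) + 2)
      ≤ ∑ i ∈ Finset.range (n + k + 1), padicValInt p (6 * (i : ℤ) - 6 * (j : ℤ) + 5) := by
    have hsum := Finset.sum_le_sum hper
    rw [Finset.sum_add_distrib, Finset.sum_add_distrib, Finset.sum_add_distrib, h1sum,
      ← hFj, ← hFkj, ← hS6, ← hS3] at hsum
    exact hsum
  have hMZ : ((1 : ℕ) : ℤ) + (padicValNat p j.factorial : ℤ)
      + (padicValNat p (k - j).factorial : ℤ)
      + ∑ i ∈ Finset.range (k + 1), (padicValInt p (3 * (i : ℤ) - 3 * (j : ℤ) + 2) : ℤ)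
      ≤ ∑ i ∈ Finset.range (n + k + 1), (padicValInt p (6 * (i : ℤ) - 6 * (j : ℤ) + 5) : ℤ) := by
    exact_mod_cast hMAIN
  have hkz : (padicValNat p k.factorial : ℤ)
      = (padicValNat p (k.choose j) : ℤ) + (padicValNat p j.factorial : ℤ)
        + (padicValNat p (k - j).factorial : ℤ) := by exact_mod_cast hkum
  omega
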